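/- Let R be a k-linear category, S a full subcategory, and define the intermediate extension K_{LR}(M) as the image of the canonical map K_L(M) → K_R(M) for an S-module M. Then an R-module M is bistable (both stable and costable) if and only if K_{LR}(res M) ≅ M. -/

import Mathlib

open CategoryTheory CategoryTheory.Limits Opposite

/-- Modules over a `k`-category `C`: functors `Cᵒᵖ ⥤ Mod k`. -/
abbrev CMod (k : Type) [Field k] (C : Type) [SmallCategory C] : Type 1 :=
  Cᵒᵖ ⥤ ModuleCat k

/-- The restriction functor along a functor `ι : S ⥤ R`. -/
noncomputable def resF (k : Type) [Field k] {S R : Type} [SmallCategory S]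
    [SmallCategory R] (ι : S ⥤ R) : CMod k R ⥤ CMod k S :=
  (Functor.whiskeringLeft Sᵒᵖ Rᵒᵖ (ModuleCat k)).obj ι.op

/-- A module `N` over `R` is supported away from the subcategory `S` if it vanishes on
all objects of `S`. -/
def SupportedAway (k : Type) [Field k] {S R : Type} [SmallCategory S] [SmallCategory R]
    (ι : S ⥤ R) (N : CMod k R) : Prop :=
  ∀ s : S, IsZero (N.obj (op (ι.obj s)))

/-- `M` is stable: no nonzero submodule supported away from `S`; equivalently
`Hom(N, M) = 0` for every module `N` supported away from `S`. -/
def Stable (k : Type) [Field k] {S R : Type} [SmallCategory S] [SmallCategory R]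
    (ι : S ⥤ R) (M : CMod k R) : Prop :=
  ∀ N : CMod k R, SupportedAway k ι N → ∀ f : N ⟶ M, f = 0

/-- `M` is costable: no nonzero quotient supported away from `S`; equivalently
`Hom(M, N) = 0` for every module `N` supported away from `S`. -/
def Costable (k : Type) [Field k] {S R : Type} [SmallCategory S] [SmallCategory R]
    (ι : S ⥤ R) (M : CMod k R) : Prop :=
  ∀ N : CMod k R, SupportedAway k ι N → ∀ f : M ⟶ N, f = 0

section KanExtensions

variable (k : Type) [Field k] {S R : Type} [SmallCategory S] [SmallCategory R]
  (ι : S ⥤ R) (KL KR : CMod k S ⥤ CMod k R)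
  (adjL : KL ⊣ resF k ι) (adjR : resF k ι ⊣ KR)
  (hiso : ∀ M : CMod k S, IsIso (adjL.unit.app M))

/-- The canonical natural map `K_L M ⟶ K_R M`, corresponding under the adjunction
`res ⊣ K_R` to the inverse of the unit `M ≅ res (K_L M)`. -/
noncomputable def canMap (M : CMod k S) : KL.obj M ⟶ KR.obj M :=
  (adjR.homEquiv (KL.obj M) M) (by haveI := hiso M; exact inv (adjL.unit.app M))

/-- The intermediate extension `K_{LR} M`: the image of the canonical map `K_L M ⟶ K_R M`. -/
noncomputable def KlrObj (M : CMod k S) : CMod k R :=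
  Limits.image (canMap k ι KL KR adjL adjR hiso M)

/-- `KK(M) = ker (K_L M ⟶ K_{LR} M)`. -/
noncomputable def KKobj (M : CMod k S) : CMod k R :=
  Limits.kernel (Limits.factorThruImage (canMap k ι KL KR adjL adjR hiso M))

/-- `CK(M) = coker (K_{LR} M ⟶ K_R M)`. -/
noncomputable def CKobj (M : CMod k S) : CMod k R :=
  Limits.cokernel (Limits.image.ι (canMap k ι KL KR adjL adjR hiso M))

end KanExtensions

section AuxLemmas

variable (k : Type) [Field k] {S R : Type} [SmallCategory S] [SmallCategory R]
  (ι : S ⥤ R)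

/-- Restriction of a module supported away from `S` is zero. -/
lemma isZero_resF_of_supportedAway {T : CMod k R} (hT : SupportedAway k ι T) :
    IsZero ((resF k ι).obj T) :=
  Functor.isZero _ (fun s => hT s.unop)

/-- Any map out of `K_L N` into a supported-away module vanishes. -/
lemma hom_from_KL_eq_zero (KL : CMod k S ⥤ CMod k R) (adjL : KL ⊣ resF k ι)
    {N : CMod k S} {T : CMod k R} (hT : SupportedAway k ι T) (h : KL.obj N ⟶ T) : h = 0 :=
  (adjL.homEquiv N T).injective
    ((isZero_resF_of_supportedAway k ι hT).eq_of_tgt _ _)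

/-- Any map from a supported-away module into `K_R N` vanishes. -/
lemma hom_to_KR_eq_zero (KR : CMod k S ⥤ CMod k R) (adjR : resF k ι ⊣ KR)
    {N : CMod k S} {T : CMod k R} (hT : SupportedAway k ι T) (g : T ⟶ KR.obj N) : g = 0 :=
  (adjR.homEquiv T N).symm.injective
    ((isZero_resF_of_supportedAway k ι hT).eq_of_src _ _)

variable (KL KR : CMod k S ⥤ CMod k R)
  (adjL : KL ⊣ resF k ι) (adjR : resF k ι ⊣ KR)
  (hiso : ∀ M : CMod k S, IsIso (adjL.unit.app M))

/-- `res (counit) = inv (unit)`. -/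
lemma resF_map_counit (M : CMod k R) :
    haveI := hiso ((resF k ι).obj M)
    (resF k ι).map (adjL.counit.app M) = inv (adjL.unit.app ((resF k ι).obj M)) := by
  haveI := hiso ((resF k ι).obj M)
  symm
  apply IsIso.inv_eq_of_hom_inv_id
  exact adjL.right_triangle_components M

/-- The canonical map at `res M` is `counit ≫ unit`. -/
lemma canMap_resF_obj (M : CMod k R) :
    canMap k ι KL KR adjL adjR hiso ((resF k ι).obj M)
      = adjL.counit.app M ≫ adjR.unit.app M := by
  haveI := hiso ((resF k ι).obj M)
  have h1 := resF_map_counit k ι KL adjL hiso M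
  show (adjR.homEquiv (KL.obj ((resF k ι).obj M)) ((resF k ι).obj M))
      (inv (adjL.unit.app ((resF k ι).obj M))) = _
  rw [← h1, Adjunction.homEquiv_unit]
  have := adjR.unit.naturality (adjL.counit.app M)
  simp only [Functor.id_map] at this; exact this.symm

end AuxLemmas

/-- an `R`-module `M` is bistable (both stable and costable) if and only if
`K_{LR}(res M) ≅ M`, where `K_{LR}` is the intermediate extension, the image of the
canonical map `K_L → K_R`. -/
theorem bistable_iff_intermediate_extension
    (k : Type) [Field k]
    (S R : Type) [SmallCategory S] [SmallCategory R]
    [Preadditive S] [Preadditive R] [CategoryTheory.Linear k S] [CategoryTheory.Linear k R]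
    (ι : S ⥤ R) [ι.Full] [ι.Faithful]
    (KL KR : CMod k S ⥤ CMod k R)
    (adjL : KL ⊣ resF k ι) (adjR : resF k ι ⊣ KR)
    (hiso : ∀ M : CMod k S, IsIso (adjL.unit.app M))
    (M : CMod k R) :
    (Stable k ι M ∧ Costable k ι M)
      ↔ Nonempty (KlrObj k ι KL KR adjL adjR hiso ((resF k ι).obj M) ≅ M) := by
  set N := (resF k ι).obj M with hN
  set c := canMap k ι KL KR adjL adjR hiso N with hc
  constructor
  · rintro ⟨hst, hcost⟩
    set εL := adjL.counit.app M with hεL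
    set ηR := adjR.unit.app M with hηR
    -- res εL is an iso
    haveI := hiso N
    have hriso : IsIso ((resF k ι).map εL) := by
      rw [resF_map_counit k ι KL adjL hiso M]; infer_instance
    -- εL is epi
    haveI hEpi : Epi εL := by
      apply Abelian.epi_of_cokernel_π_eq_zero
      apply hcost
      intro s
      have happ : IsIso (εL.app (op (ι.obj s))) := by
        haveI := hriso
        exact inferInstanceAs (IsIso (((resF k ι).map εL).app (op s)))
      haveI := happ
      have hz : IsZero (cokernel (εL.app (op (ι.obj s)))) :=
        (cokernel.ofEpi _).isZero_iff.mpr (isZero_zero _)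
      have e := PreservesCokernel.iso ((evaluation Rᵒᵖ (ModuleCat k)).obj (op (ι.obj s))) εL
      exact e.isZero_iff.mpr hz
    -- ηR is mono
    haveI hMono : Mono ηR := by
      apply Abelian.mono_of_kernel_ι_eq_zero
      apply hst
      intro s
      have hsplit : IsSplitMono (ηR.app (op (ι.obj s))) := by
        constructor
        refine ⟨⟨(adjR.counit.app N).app (op s), ?_⟩⟩
        have := adjR.left_triangle_components M
        have h2 := congrArg (fun t => NatTrans.app t (op s)) this
        exact h2
      haveI := hsplit
      have hz : IsZero (kernel (ηR.app (op (ι.obj s)))) :=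
        (kernel.ofMono _).isZero_iff.mpr (isZero_zero _)
      have e := PreservesKernel.iso ((evaluation Rᵒᵖ (ModuleCat k)).obj (op (ι.obj s))) ηR
      exact e.isZero_iff.mpr hz
    haveI : StrongEpi εL := strongEpi_of_epi εL
    exact ⟨(image.isoStrongEpiMono εL ηR (canMap_resF_obj k ι KL KR adjL adjR hiso M).symm).symm⟩
  · rintro ⟨e⟩
    replace e : image c ≅ M := e
    constructor
    · intro T hT f
      have h0 : f ≫ (e.inv ≫ image.ι c) = 0 := by
        rw [← Category.assoc]
        exact hom_to_KR_eq_zero k ι KR adjR hT _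
      haveI : Mono (e.inv ≫ image.ι c) := mono_comp _ _
      exact zero_of_comp_mono _ h0
    · intro T hT f
      have h0 : factorThruImage c ≫ (e.hom ≫ f) = 0 :=
        hom_from_KL_eq_zero k ι KL adjL hT _
      have h1 : e.hom ≫ f = 0 := zero_of_epi_comp _ h0
      exact zero_of_epi_comp e.hom (by rw [h1])
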